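/- Let O be a Hermitian 2^n × 2^n matrix and let 0 ≤ κ ≤ 2n. Then Tr((O ⊗ O) · Q_κ^1) = (−1)^{⌊κ/2⌋} · binom(2n, κ)^{−1/2} · C_κ(O), where C_κ(O) := i^{κ mod 2} · Tr(P · O_κ · O_{2n−κ}) is the κ-coherence of O, P = Z^{⊗n}, and O_κ := 2^{−n} Σ_{|s|=κ} Tr((c^s)† O) · c^s denotes the orthogonal projection of O onto B_κ. -/

import Mathlib

open Matrix Complex
open scoped Kronecker

noncomputable section

abbrev QIdx (n : ℕ) := Fin n → Fin 2
abbrev NMat (n : ℕ) := Matrix (QIdx n) (QIdx n) ℂ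
abbrev NMat2 (n : ℕ) := Matrix (QIdx n × QIdx n) (QIdx n × QIdx n) ℂ

/-- The 2×2 Pauli X matrix. -/
def σX : Matrix (Fin 2) (Fin 2) ℂ := !![0, 1; 1, 0]
/-- The 2×2 Pauli Y matrix. -/
def σY : Matrix (Fin 2) (Fin 2) ℂ := !![0, -Complex.I; Complex.I, 0]
/-- The 2×2 Pauli Z matrix. -/
def σZ : Matrix (Fin 2) (Fin 2) ℂ := !![1, 0; 0, -1]

/-- Tensor (Kronecker) product of `n` one-qubit matrices, realized on index type `Fin n → Fin 2`. -/
def tensor {n : ℕ} (M : Fin n → Matrix (Fin 2) (Fin 2) ℂ) : NMat n :=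
  Matrix.of fun f g => ∏ i, M i (f i) (g i)

/-- The Jordan–Wigner Majorana operator `c_μ` (0-based index: `c_{2i} = Z^{⊗i} X I…`,
`c_{2i+1} = Z^{⊗i} Y I…`). -/
def majorana (n : ℕ) (μ : Fin (2 * n)) : NMat n :=
  tensor fun j =>
    if (j : ℕ) < (μ : ℕ) / 2 then σZ
    else if (j : ℕ) = (μ : ℕ) / 2 then (if (μ : ℕ) % 2 = 0 then σX else σY)
    else 1

/-- Ordered product `c^s` of the Majorana operators indexed by a subset `s`. -/
def cProd (n : ℕ) (s : Finset (Fin (2 * n))) : NMat n :=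
  ((s.sort (· ≤ ·)).map (majorana n)).prod

/-- The module `B_κ`: the complex span of products of `κ` distinct Majoranas. -/
def Bspace (n κ : ℕ) : Submodule ℂ (NMat n) :=
  Submodule.span ℂ {M | ∃ s : Finset (Fin (2 * n)), s.card = κ ∧ M = cProd n s}

/-- The Pauli string with `Z` on qubit `j` and identity elsewhere. -/
def pauliZ (n : ℕ) (j : Fin n) : NMat n := tensor fun k => if k = j then σZ else 1

/-- The Pauli string with `X` on qubits `j` and `j+1` and identity elsewhere. -/
def pauliXX (n : ℕ) (j : Fin n) : NMat n :=
  tensor fun k => if (k : ℕ) = (j : ℕ) ∨ (k : ℕ) = (j : ℕ) + 1 then σX else 1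

/-- The parity operator `P = Z^{⊗n}`. -/
def parity (n : ℕ) : NMat n := tensor fun _ => σZ


/-- Normalization constant `(d √C(2n,κ))⁻¹` with `d = 2^n`. -/
def Qnorm (n κ : ℕ) : ℂ := ((2 ^ n : ℂ) * ((Real.sqrt (Nat.choose (2 * n) κ) : ℝ) : ℂ))⁻¹

/-- The quadratic symmetry `Q_κ^0 = (d √C(2n,κ))⁻¹ Σ_{|s|=κ} c^s ⊗ c^s`. -/
def Q0 (n κ : ℕ) : NMat2 n :=
  Qnorm n κ • ∑ s ∈ Finset.powersetCard κ (Finset.univ : Finset (Fin (2 * n))),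
    (cProd n s) ⊗ₖ (cProd n s)

/-- The sum of the (1-based) elements of `s`, i.e. `π(s)`. -/
def piSum (n : ℕ) (s : Finset (Fin (2 * n))) : ℕ := ∑ μ ∈ s, ((μ : ℕ) + 1)

/-- The quadratic symmetry
`Q_κ^1 = (d √C(2n,κ))⁻¹ (−i)^n i^{κ mod 2} Σ_{|s|=κ} (−1)^{π(s)} c^s ⊗ c^{s̄}`. -/
def Q1 (n κ : ℕ) : NMat2 n :=
  (Qnorm n κ * (-Complex.I) ^ n * Complex.I ^ (κ % 2)) •
    ∑ s ∈ Finset.powersetCard κ (Finset.univ : Finset (Fin (2 * n))),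
      ((-1 : ℂ)) ^ (piSum n s) • ((cProd n s) ⊗ₖ (cProd n sᶜ))

/-- The matchgate circuit generators `{Z_j} ∪ {X_j X_{j+1}}`. -/
def matchgateGens (n : ℕ) : Set (NMat n) :=
  {M | ∃ j : Fin n, M = pauliZ n j} ∪
  {M | ∃ j : Fin n, (j : ℕ) + 1 < n ∧ M = pauliXX n j}

/-- The two-copy representation `H ⊗ I + I ⊗ H` of a generator `H`. -/
def bigH (n : ℕ) (H : NMat n) : NMat2 n :=
  H ⊗ₖ (1 : NMat n) + (1 : NMat n) ⊗ₖ H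

/-- Orthogonal projection of `M` onto the module `B_κ`:
`M_κ = 2^{−n} Σ_{|s|=κ} Tr((c^s)† M) c^s`. -/
def projB (n κ : ℕ) (M : NMat n) : NMat n :=
  (2 ^ n : ℂ)⁻¹ • ∑ s ∈ Finset.powersetCard κ (Finset.univ : Finset (Fin (2 * n))),
    Matrix.trace ((cProd n s)ᴴ * M) • cProd n s

/-- The `κ`-coherence `C_κ(M) = i^{κ mod 2} Tr(P M_κ M_{2n−κ})`. -/
def coherence (n κ : ℕ) (M : NMat n) : ℂ :=
  Complex.I ^ (κ % 2) * Matrix.trace (parity n * projB n κ M * projB n (2 * n - κ) M)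

namespace TQ1
variable {n : ℕ}

lemma tensor_mul (M N : Fin n → Matrix (Fin 2) (Fin 2) ℂ) :
    tensor M * tensor N = tensor (fun j => M j * N j) := by
  ext f g
  simp only [tensor, Matrix.mul_apply, Matrix.of_apply]
  rw [Fintype.prod_sum fun i x => M i (f i) x * N i x (g i)]
  exact Finset.sum_congr rfl fun x _ => (Finset.prod_mul_distrib).symm

lemma tensor_one : tensor (fun _ => (1 : Matrix (Fin 2) (Fin 2) ℂ)) = (1 : NMat n) := by
  ext f g
  simp only [tensor, Matrix.of_apply, Matrix.one_apply]
  by_cases h : f = g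
  · subst h; simp
  · rw [if_neg h]
    obtain ⟨i, hi⟩ : ∃ i, f i ≠ g i := by
      by_contra hc; push_neg at hc; exact h (funext hc)
    exact Finset.prod_eq_zero (Finset.mem_univ i) (by simp [hi])

lemma trace_tensor (M : Fin n → Matrix (Fin 2) (Fin 2) ℂ) :
    Matrix.trace (tensor M) = ∏ j, Matrix.trace (M j) := by
  simp only [Matrix.trace, Matrix.diag, tensor, Matrix.of_apply]
  rw [Fintype.prod_sum fun i x => M i x x]

lemma tensor_conjT (M : Fin n → Matrix (Fin 2) (Fin 2) ℂ) :
    (tensor M)ᴴ = tensor (fun j => (M j)ᴴ) := by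
  ext f g
  simp only [tensor, Matrix.conjTranspose_apply, Matrix.of_apply, star_prod]

lemma tensor_smul_prod (d : Fin n → ℂ) (M : Fin n → Matrix (Fin 2) (Fin 2) ℂ) :
    tensor (fun j => d j • M j) = (∏ j, d j) • tensor M := by
  ext f g
  simp only [tensor, Matrix.of_apply, Matrix.smul_apply, smul_eq_mul, Finset.prod_mul_distrib]

end TQ1

namespace TQ1

lemma σZ_sq : σZ * σZ = 1 := by
  rw [show (1 : Matrix (Fin 2) (Fin 2) ℂ) = !![1,0;0,1] by rw [Matrix.one_fin_two]]
  simp [σZ, Matrix.mul_fin_two]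

lemma Zpow (c : ℕ) : σZ ^ c = if c % 2 = 0 then 1 else σZ := by
  induction c with
  | zero => simp
  | succ k ih =>
    rw [pow_succ, ih]
    rcases Nat.mod_two_eq_zero_or_one k with h | h
    · rw [if_pos h, if_neg (show ¬(k+1) % 2 = 0 by omega), one_mul]
    · rw [if_neg (show ¬k % 2 = 0 by omega), if_pos (show (k+1) % 2 = 0 by omega), σZ_sq]

variable {n : ℕ}

def pw (a b : Prop) [Decidable a] [Decidable b] (c : ℕ) : Matrix (Fin 2) (Fin 2) ℂ :=
  (if a then σX else 1) * (if b then σY else 1) * σZ ^ c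

def f0 (j : Fin n) : Fin (2*n) := ⟨2*j.1, by have := j.isLt; omega⟩
def f1 (j : Fin n) : Fin (2*n) := ⟨2*j.1+1, by have := j.isLt; omega⟩

def zc (s : Finset (Fin (2*n))) (j : Fin n) : ℕ :=
  (s.filter (fun μ => 2*j.1+2 ≤ μ.1)).card

def qf (s : Finset (Fin (2*n))) (j : Fin n) : Matrix (Fin 2) (Fin 2) ℂ :=
  pw (f0 j ∈ s) (f1 j ∈ s) (zc s j)

def mfac (μ : Fin (2*n)) (j : Fin n) : Matrix (Fin 2) (Fin 2) ℂ :=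
  if (j : ℕ) < (μ : ℕ) / 2 then σZ
  else if (j : ℕ) = (μ : ℕ) / 2 then (if (μ : ℕ) % 2 = 0 then σX else σY)
  else 1

lemma majorana_eq (μ : Fin (2*n)) : majorana n μ = tensor (mfac μ) := rfl

lemma zc_insert (s : Finset (Fin (2*n))) (μ : Fin (2*n)) (hμs : μ ∉ s) (j : Fin n) :
    zc (insert μ s) j = (if 2*j.1+2 ≤ μ.1 then 1 else 0) + zc s j := by
  unfold zc
  rw [Finset.filter_insert]
  split
  · rw [Finset.card_insert_of_notMem (fun h => hμs (Finset.mem_of_mem_filter _ h))]; omega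
  · simp

lemma qf_empty (j : Fin n) : qf (∅ : Finset (Fin (2*n))) j = 1 := by
  simp [qf, pw, zc]

lemma qf_insert (s : Finset (Fin (2*n))) (μ : Fin (2*n)) (hmin : ∀ x ∈ s, μ < x) (hμs : μ ∉ s)
    (j : Fin n) : qf (insert μ s) j = mfac μ j * qf s j := by
  rcases lt_trichotomy (j : ℕ) ((μ : ℕ)/2) with hj | hj | hj
  · -- below the active qubit: factor σZ
    have h2j : 2*j.1+1 < μ.1 := by omega
    have hf0 : f0 j ∉ insert μ s := by
      rw [Finset.mem_insert]
      rintro (h | h)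
      · have := congrArg Fin.val h; simp only [f0] at this; omega
      · have : μ.1 < 2*j.1 := hmin _ h; omega
    have hf1 : f1 j ∉ insert μ s := by
      rw [Finset.mem_insert]
      rintro (h | h)
      · have := congrArg Fin.val h; simp only [f1] at this; omega
      · have : μ.1 < 2*j.1+1 := hmin _ h; omega
    have hf0s : f0 j ∉ s := fun h => hf0 (Finset.mem_insert_of_mem h)
    have hf1s : f1 j ∉ s := fun h => hf1 (Finset.mem_insert_of_mem h)
    rw [mfac, if_pos hj]
    simp only [qf, pw, if_neg hf0, if_neg hf1, if_neg hf0s, if_neg hf1s,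
      zc_insert s μ hμs j, if_pos (show 2*j.1+2 ≤ μ.1 by omega), one_mul, pow_add, pow_one]
  · -- the active qubit
    rcases Nat.mod_two_eq_zero_or_one (μ : ℕ) with hpar | hpar
    · -- μ = 2j
      have hμ2j : μ.1 = 2*j.1 := by omega
      have hf0μ : f0 j = μ := by apply Fin.ext; simp [f0, hμ2j]
      have hf0ins : f0 j ∈ insert μ s := by rw [hf0μ]; exact Finset.mem_insert_self _ _
      have hf0s : f0 j ∉ s := by rw [hf0μ]; exact hμs
      have hf1ne : f1 j ≠ μ := by
        intro h; have := congrArg Fin.val h; simp only [f1] at this; omega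
      have hf1mem : (f1 j ∈ insert μ s) = (f1 j ∈ s) := by
        simp [Finset.mem_insert, hf1ne]
      rw [mfac, if_neg (by omega), if_pos hj, if_pos hpar]
      simp only [qf, pw, if_pos hf0ins, if_neg hf0s, hf1mem,
        zc_insert s μ hμs j, if_neg (show ¬2*j.1+2 ≤ μ.1 by omega), zero_add, one_mul, mul_assoc]
    · -- μ = 2j+1
      have hμ2j : μ.1 = 2*j.1+1 := by omega
      have hf1μ : f1 j = μ := by apply Fin.ext; simp [f1, hμ2j]
      have hf1ins : f1 j ∈ insert μ s := by rw [hf1μ]; exact Finset.mem_insert_self _ _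
      have hf1s : f1 j ∉ s := by rw [hf1μ]; exact hμs
      have hf0ne : f0 j ≠ μ := by
        intro h; have := congrArg Fin.val h; simp only [f0] at this; omega
      have hf0s : f0 j ∉ s := by
        intro h; have : μ.1 < 2*j.1 := hmin _ h; omega
      have hf0ni : f0 j ∉ insert μ s := by
        rw [Finset.mem_insert]; rintro (h | h); exacts [hf0ne h, hf0s h]
      rw [mfac, if_neg (by omega), if_pos hj, if_neg (by omega)]
      simp only [qf, pw, if_neg hf0ni, if_neg hf0s, if_pos hf1ins, if_neg hf1s,
        zc_insert s μ hμs j, if_neg (show ¬2*j.1+2 ≤ μ.1 by omega), zero_add, one_mul, mul_assoc]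
  · -- above the active qubit: factor 1
    have h2j : μ.1 < 2*j.1 := by omega
    have hf0ne : f0 j ≠ μ := by
      intro h; have := congrArg Fin.val h; simp only [f0] at this; omega
    have hf1ne : f1 j ≠ μ := by
      intro h; have := congrArg Fin.val h; simp only [f1] at this; omega
    rw [mfac, if_neg (by omega), if_neg (by omega), one_mul]
    simp only [qf, pw, zc_insert s μ hμs j, if_neg (show ¬2*j.1+2 ≤ μ.1 by omega), zero_add,
      Finset.mem_insert]
    simp [hf0ne, hf1ne]

lemma cProd_empty : cProd n (∅ : Finset (Fin (2*n))) = 1 := by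
  simp [cProd]

lemma cProd_tensor (s : Finset (Fin (2*n))) : cProd n s = tensor (qf s) := by
  induction s using Finset.induction_on_min with
  | empty =>
    rw [cProd_empty,
      show tensor (qf (∅ : Finset (Fin (2*n)))) = tensor (fun _ => 1) from
        congrArg tensor (funext qf_empty)]
    exact (tensor_one).symm
  | insert μ s hmin ih =>
    have hμs : μ ∉ s := fun h => lt_irrefl μ (hmin μ h)
    have hsort : (insert μ s).sort (· ≤ ·) = μ :: s.sort (· ≤ ·) :=
      Finset.sort_insert (· ≤ ·) (fun b hb => le_of_lt (hmin b hb)) hμs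
    rw [cProd, hsort, List.map_cons, List.prod_cons, ← cProd, ih, majorana_eq, tensor_mul]
    exact congrArg tensor (funext fun j => (qf_insert s μ hmin hμs j).symm)

end TQ1

namespace TQ1
variable {n : ℕ}

lemma negOnePowC (k : ℕ) : ((-1 : ℂ)) ^ k = if k % 2 = 0 then 1 else -1 := by
  rcases Nat.even_or_odd k with h | h
  · rw [h.neg_one_pow, if_pos (Nat.even_iff.mp h)]
  · rw [h.neg_one_pow, if_neg (by rw [Nat.odd_iff.mp h]; omega)]

lemma card_univ_filter_le (m a : ℕ) :
    ((Finset.univ : Finset (Fin m)).filter (fun μ => a ≤ μ.1)).card = m - a := by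
  rcases lt_or_ge a m with h | h
  · have heq : (Finset.univ : Finset (Fin m)).filter (fun μ => a ≤ μ.1)
        = Finset.Ici (⟨a, h⟩ : Fin m) := by
      ext x
      simp [Finset.mem_Ici, Fin.le_def]
    rw [heq, Fin.card_Ici]
  · have heq : (Finset.univ : Finset (Fin m)).filter (fun μ => a ≤ μ.1) = ∅ := by
      ext x
      simp only [Finset.mem_filter, Finset.mem_univ, true_and, Finset.notMem_empty, iff_false]
      have := x.isLt; omega
    rw [heq, Finset.card_empty]; omega

lemma zc_add_compl (s : Finset (Fin (2*n))) (j : Fin n) :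
    zc s j + zc sᶜ j = 2*n - (2*j.1+2) := by
  unfold zc
  rw [← Finset.card_union_of_disjoint
      (Finset.disjoint_filter_filter disjoint_compl_right),
    ← Finset.filter_union, Finset.union_compl, card_univ_filter_le]

lemma zc_compl_mod (s : Finset (Fin (2*n))) (j : Fin n) : zc s j % 2 = zc sᶜ j % 2 := by
  have h := zc_add_compl s j
  have := j.isLt
  omega

lemma ptrace (a b a' b' : Prop) [Decidable a] [Decidable b] [Decidable a'] [Decidable b']
    (c c' : ℕ) (hcc : c % 2 = c' % 2) :
    Matrix.trace (σZ * pw a b c * pw a' b' c') =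
      if ((a' ↔ ¬a) ∧ (b' ↔ ¬b)) then
        2*Complex.I*(if (a ↔ b) then 1
          else (if a then 1 else -1) * (if c % 2 = 0 then 1 else -1))
      else 0 := by
  rw [pw, pw, Zpow c, Zpow c', ← hcc]
  by_cases ha : a <;> by_cases hb : b <;> by_cases ha' : a' <;> by_cases hb' : b' <;>
    rcases Nat.mod_two_eq_zero_or_one c with hc | hc <;>
    simp only [ha, hb, ha', hb', hc, if_true, if_false, one_ne_zero, iff_true, iff_false,
      not_true, not_false_iff, and_self, and_true, true_and, and_false, false_and,
      iff_self, reduceIte] <;>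
    norm_num [σX, σY, σZ, Matrix.mul_fin_two, Matrix.one_fin_two, Matrix.trace_fin_two_of,
      Complex.ext_iff]

lemma pw_conjT (a b : Prop) [Decidable a] [Decidable b] (c : ℕ) :
    (pw a b c)ᴴ = ((if a ∧ b then (-1:ℂ) else 1) *
      (if (a ↔ b) then 1 else (if c % 2 = 0 then 1 else -1))) • pw a b c := by
  rw [pw, Zpow c]
  by_cases ha : a <;> by_cases hb : b <;> rcases Nat.mod_two_eq_zero_or_one c with hc | hc <;>
    simp only [ha, hb, hc, if_true, if_false, iff_true, iff_false, not_true, not_false_iff,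
      and_self, and_true, true_and, and_false, false_and, iff_self, reduceIte] <;>
    ext i k <;> fin_cases i <;> fin_cases k <;>
    simp [σX, σY, σZ, Matrix.mul_fin_two, Matrix.one_fin_two, Matrix.conjTranspose_apply,
      Complex.ext_iff]

end TQ1

namespace TQ1
variable {n : ℕ}

def eps (s : Finset (Fin (2*n))) (j : Fin n) : ℂ :=
  if ((f0 j ∈ s) ↔ (f1 j ∈ s)) then 1
  else (if f0 j ∈ s then 1 else -1) * (if zc s j % 2 = 0 then 1 else -1)

def dl (s : Finset (Fin (2*n))) (j : Fin n) : ℂ :=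
  (if (f0 j ∈ s) ∧ (f1 j ∈ s) then (-1:ℂ) else 1) *
    (if ((f0 j ∈ s) ↔ (f1 j ∈ s)) then 1 else (if zc s j % 2 = 0 then 1 else -1))

def oddc (s : Finset (Fin (2*n))) : ℕ := (s.filter (fun μ => μ.1 % 2 = 1)).card

section step
variable (s : Finset (Fin (2*n))) (μ : Fin (2*n))

lemma f0_ne (j : Fin n) (hj : j.1 ≠ μ.1/2) : f0 j ≠ μ := by
  intro h; have := congrArg Fin.val h; simp only [f0] at this; omega

lemma f1_ne (j : Fin n) (hj : j.1 ≠ μ.1/2) : f1 j ≠ μ := by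
  intro h; have := congrArg Fin.val h; simp only [f1] at this; omega

lemma mem_unchanged₀ (j : Fin n) (hj : j.1 ≠ μ.1/2) :
    (f0 j ∈ insert μ s) = (f0 j ∈ s) := by
  simp [Finset.mem_insert, f0_ne μ j hj]

lemma mem_unchanged₁ (j : Fin n) (hj : j.1 ≠ μ.1/2) :
    (f1 j ∈ insert μ s) = (f1 j ∈ s) := by
  simp [Finset.mem_insert, f1_ne μ j hj]

lemma eps_unchanged (hmin : ∀ x ∈ s, μ < x) (hμs : μ ∉ s) (j : Fin n) (hj : j.1 ≠ μ.1/2) :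
    eps (insert μ s) j = eps s j := by
  by_cases hlt : 2*j.1+2 ≤ μ.1
  · have h0s : f0 j ∉ s := fun h => by have : μ.1 < 2*j.1 := hmin _ h; omega
    have h1s : f1 j ∉ s := fun h => by have : μ.1 < 2*j.1+1 := hmin _ h; omega
    simp [eps, mem_unchanged₀ s μ j hj, mem_unchanged₁ s μ j hj, h0s, h1s]
  · have hzc : zc (insert μ s) j = zc s j := by
      rw [zc_insert _ _ hμs, if_neg hlt, zero_add]
    simp only [eps, mem_unchanged₀ s μ j hj, mem_unchanged₁ s μ j hj, hzc]

lemma dl_unchanged (hmin : ∀ x ∈ s, μ < x) (hμs : μ ∉ s) (j : Fin n) (hj : j.1 ≠ μ.1/2) :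
    dl (insert μ s) j = dl s j := by
  by_cases hlt : 2*j.1+2 ≤ μ.1
  · have h0s : f0 j ∉ s := fun h => by have : μ.1 < 2*j.1 := hmin _ h; omega
    have h1s : f1 j ∉ s := fun h => by have : μ.1 < 2*j.1+1 := hmin _ h; omega
    simp [dl, mem_unchanged₀ s μ j hj, mem_unchanged₁ s μ j hj, h0s, h1s]
  · have hzc : zc (insert μ s) j = zc s j := by
      rw [zc_insert _ _ hμs, if_neg hlt, zero_add]
    simp only [dl, mem_unchanged₀ s μ j hj, mem_unchanged₁ s μ j hj, hzc]

lemma zc_insert_star (hμs : μ ∉ s) (j : Fin n) (hj : j.1 = μ.1/2) :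
    zc (insert μ s) j = zc s j := by
  rw [zc_insert _ _ hμs, if_neg (by omega), zero_add]

lemma zc_min_even (hmin : ∀ x ∈ s, μ < x) (j : Fin n) (hj : j.1 = μ.1/2) (hpar : μ.1 % 2 = 0) :
    zc s j + (if f1 j ∈ s then 1 else 0) = s.card := by
  have hfe : s.filter (fun x => 2*j.1+2 ≤ x.1) = s.erase (f1 j) := by
    ext x
    simp only [Finset.mem_filter, Finset.mem_erase]
    constructor
    · rintro ⟨hx, hle⟩
      refine ⟨fun hxf => ?_, hx⟩
      have := congrArg Fin.val hxf; simp only [f1] at this; omega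
    · rintro ⟨hne, hx⟩
      refine ⟨hx, ?_⟩
      have h1 : μ.1 < x.1 := hmin x hx
      have h2 : x.1 ≠ 2*j.1+1 := fun hc => hne (Fin.ext (by simp only [f1]; omega))
      omega
  rw [zc, hfe]
  by_cases hb : f1 j ∈ s
  · rw [if_pos hb, Finset.card_erase_of_mem hb]
    have : 0 < s.card := Finset.card_pos.mpr ⟨_, hb⟩
    omega
  · rw [if_neg hb, Finset.erase_eq_of_notMem hb, add_zero]

lemma zc_min_odd (hmin : ∀ x ∈ s, μ < x) (j : Fin n) (hj : j.1 = μ.1/2) (hpar : μ.1 % 2 = 1) :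
    zc s j = s.card := by
  have hfe : s.filter (fun x => 2*j.1+2 ≤ x.1) = s := by
    apply Finset.filter_true_of_mem
    intro x hx
    have : μ.1 < x.1 := hmin x hx
    omega
  rw [zc, hfe]

lemma eps_step (hmin : ∀ x ∈ s, μ < x) (hμs : μ ∉ s) (j : Fin n) (hj : j.1 = μ.1/2) :
    eps (insert μ s) j = (-1 : ℂ)^(s.card + μ.1 % 2) * eps s j := by
  rw [negOnePowC]
  have hzi := zc_insert_star s μ hμs j hj
  rcases Nat.mod_two_eq_zero_or_one μ.1 with hpar | hpar
  · have hf0μ : f0 j = μ := Fin.ext (show 2*j.1 = μ.1 by omega)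
    have hf0i : f0 j ∈ insert μ s := by rw [hf0μ]; exact Finset.mem_insert_self _ _
    have hf0s : f0 j ∉ s := by rw [hf0μ]; exact hμs
    have hf1ne : f1 j ≠ μ := fun h => by
      have := congrArg Fin.val h; simp only [f1] at this; omega
    have hf1 : (f1 j ∈ insert μ s) = (f1 j ∈ s) := by simp [Finset.mem_insert, hf1ne]
    have hcard := zc_min_even s μ hmin j hj hpar
    by_cases hb : f1 j ∈ s <;>
      simp only [hb, if_pos, if_neg, if_true, if_false, add_zero] at hcard <;>
      simp only [eps, hf1, hzi, hpar, add_zero, hf0i, hf0s, hb, iff_true, iff_false,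
        true_iff, false_iff, not_true, not_false_iff, if_true, if_false, not_false_eq_true,
        if_neg, reduceIte] <;>
      rcases Nat.mod_two_eq_zero_or_one (zc s j) with h2 | h2 <;>
      rcases Nat.mod_two_eq_zero_or_one s.card with h3 | h3 <;>
      simp only [h2, h3, if_true, if_false, reduceIte, one_ne_zero] <;>
      first
      | (exfalso; omega)
      | (norm_num; done)
      | (rw [if_pos (by omega)]; (try norm_num); done)
      | (rw [if_neg (by omega)]; (try norm_num); done)
  · have hf1μ : f1 j = μ := Fin.ext (show 2*j.1+1 = μ.1 by omega)
    have hf1i : f1 j ∈ insert μ s := by rw [hf1μ]; exact Finset.mem_insert_self _ _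
    have hf1s : f1 j ∉ s := by rw [hf1μ]; exact hμs
    have hf0s : f0 j ∉ s := fun h => by have : μ.1 < 2*j.1 := hmin _ h; omega
    have hf0i : f0 j ∉ insert μ s := by
      rw [Finset.mem_insert]
      rintro (h | h)
      · have := congrArg Fin.val h; simp only [f0] at this; omega
      · exact hf0s h
    have hcard := zc_min_odd s μ hmin j hj hpar
    simp only [eps, hzi, hcard, hpar, hf0i, hf0s, hf1i, hf1s, iff_true, iff_false,
      true_iff, false_iff, not_true, not_false_iff, if_true, if_false, not_false_eq_true,
      reduceIte] <;>
    rcases Nat.mod_two_eq_zero_or_one s.card with h3 | h3 <;>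
    simp only [h3, if_true, if_false, reduceIte, one_ne_zero] <;>
    first
      | (exfalso; omega)
      | (norm_num; done)
      | (rw [if_pos (by omega)]; (try norm_num); done)
      | (rw [if_neg (by omega)]; (try norm_num); done)

lemma dl_step (hmin : ∀ x ∈ s, μ < x) (hμs : μ ∉ s) (j : Fin n) (hj : j.1 = μ.1/2) :
    dl (insert μ s) j = (-1 : ℂ)^(s.card) * dl s j := by
  rw [negOnePowC]
  have hzi := zc_insert_star s μ hμs j hj
  rcases Nat.mod_two_eq_zero_or_one μ.1 with hpar | hpar
  · have hf0μ : f0 j = μ := Fin.ext (show 2*j.1 = μ.1 by omega)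
    have hf0i : f0 j ∈ insert μ s := by rw [hf0μ]; exact Finset.mem_insert_self _ _
    have hf0s : f0 j ∉ s := by rw [hf0μ]; exact hμs
    have hf1ne : f1 j ≠ μ := fun h => by
      have := congrArg Fin.val h; simp only [f1] at this; omega
    have hf1 : (f1 j ∈ insert μ s) = (f1 j ∈ s) := by simp [Finset.mem_insert, hf1ne]
    have hcard := zc_min_even s μ hmin j hj hpar
    by_cases hb : f1 j ∈ s <;>
      simp only [hb, if_pos, if_neg, if_true, if_false, add_zero] at hcard <;>
      simp only [dl, hf1, hzi, hf0i, hf0s, hb, iff_true, iff_false,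
        true_iff, false_iff, not_true, not_false_iff, if_true, if_false, not_false_eq_true,
        true_and, false_and, and_true, and_false, reduceIte] <;>
      rcases Nat.mod_two_eq_zero_or_one (zc s j) with h2 | h2 <;>
      rcases Nat.mod_two_eq_zero_or_one s.card with h3 | h3 <;>
      simp only [h2, h3, if_true, if_false, reduceIte, one_ne_zero] <;>
      first
      | (exfalso; omega)
      | (norm_num; done)
      | (rw [if_pos (by omega)]; (try norm_num); done)
      | (rw [if_neg (by omega)]; (try norm_num); done)
  · have hf1μ : f1 j = μ := Fin.ext (show 2*j.1+1 = μ.1 by omega)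
    have hf1i : f1 j ∈ insert μ s := by rw [hf1μ]; exact Finset.mem_insert_self _ _
    have hf1s : f1 j ∉ s := by rw [hf1μ]; exact hμs
    have hf0s : f0 j ∉ s := fun h => by have : μ.1 < 2*j.1 := hmin _ h; omega
    have hf0i : f0 j ∉ insert μ s := by
      rw [Finset.mem_insert]
      rintro (h | h)
      · have := congrArg Fin.val h; simp only [f0] at this; omega
      · exact hf0s h
    have hcard := zc_min_odd s μ hmin j hj hpar
    simp only [dl, hzi, hcard, hf0i, hf0s, hf1i, hf1s, iff_true, iff_false,
      true_iff, false_iff, not_true, not_false_iff, if_true, if_false, not_false_eq_true,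
      true_and, false_and, and_true, and_false, reduceIte] <;>
    rcases Nat.mod_two_eq_zero_or_one s.card with h3 | h3 <;>
    simp only [h3, if_true, if_false, reduceIte, one_ne_zero] <;>
    first
      | (exfalso; omega)
      | (norm_num; done)
      | (rw [if_pos (by omega)]; (try norm_num); done)
      | (rw [if_neg (by omega)]; (try norm_num); done)

end step
end TQ1

namespace TQ1
variable {n : ℕ}

lemma eps_empty (j : Fin n) : eps (∅ : Finset (Fin (2*n))) j = 1 := by simp [eps]
lemma dl_empty (j : Fin n) : dl (∅ : Finset (Fin (2*n))) j = 1 := by simp [dl]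

lemma oddc_insert (s : Finset (Fin (2*n))) (μ : Fin (2*n)) (hμs : μ ∉ s) :
    oddc (insert μ s) = μ.1 % 2 + oddc s := by
  unfold oddc
  rw [Finset.filter_insert]
  by_cases h : μ.1 % 2 = 1
  · rw [if_pos h, Finset.card_insert_of_notMem (fun hc => hμs (Finset.mem_of_mem_filter _ hc)), h]
    omega
  · rw [if_neg h, show μ.1 % 2 = 0 by omega, zero_add]

lemma choose_succ_two (k : ℕ) : (k+1).choose 2 = k.choose 2 + k := by
  rw [Nat.choose_succ_succ, Nat.choose_one_right, add_comm]

lemma eps_prod (s : Finset (Fin (2*n))) :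
    ∏ j, eps s j = (-1 : ℂ)^(oddc s + Nat.choose s.card 2) := by
  induction s using Finset.induction_on_min with
  | empty => simp [eps_empty, oddc]
  | insert μ s hmin ih =>
    have hμs : μ ∉ s := fun h => lt_irrefl μ (hmin μ h)
    have hlt : μ.1/2 < n := by have := μ.isLt; omega
    have h1 : ∏ j ∈ Finset.univ.erase (⟨μ.1/2, hlt⟩ : Fin n), eps (insert μ s) j
        = ∏ j ∈ Finset.univ.erase (⟨μ.1/2, hlt⟩ : Fin n), eps s j := by
      refine Finset.prod_congr rfl (fun j hj => eps_unchanged s μ hmin hμs j ?_)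
      intro hc
      exact (Finset.mem_erase.mp hj).1 (Fin.ext hc)
    calc ∏ j, eps (insert μ s) j
        = eps (insert μ s) ⟨μ.1/2, hlt⟩
            * ∏ j ∈ Finset.univ.erase (⟨μ.1/2, hlt⟩ : Fin n), eps (insert μ s) j :=
          (Finset.mul_prod_erase _ _ (Finset.mem_univ _)).symm
      _ = ((-1:ℂ)^(s.card + μ.1 % 2) * eps s ⟨μ.1/2, hlt⟩)
            * ∏ j ∈ Finset.univ.erase (⟨μ.1/2, hlt⟩ : Fin n), eps s j := by
          rw [eps_step s μ hmin hμs ⟨μ.1/2, hlt⟩ rfl, h1]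
      _ = (-1:ℂ)^(s.card + μ.1 % 2) * ∏ j, eps s j := by
          rw [mul_assoc, Finset.mul_prod_erase _ _ (Finset.mem_univ _)]
      _ = (-1:ℂ)^(oddc (insert μ s) + Nat.choose (insert μ s).card 2) := by
          rw [ih, ← pow_add, oddc_insert s μ hμs, Finset.card_insert_of_notMem hμs,
            choose_succ_two]
          congr 1
          omega

lemma dl_prod (s : Finset (Fin (2*n))) :
    ∏ j, dl s j = (-1 : ℂ)^(Nat.choose s.card 2) := by
  induction s using Finset.induction_on_min with
  | empty => simp [dl_empty]
  | insert μ s hmin ih =>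
    have hμs : μ ∉ s := fun h => lt_irrefl μ (hmin μ h)
    have hlt : μ.1/2 < n := by have := μ.isLt; omega
    have h1 : ∏ j ∈ Finset.univ.erase (⟨μ.1/2, hlt⟩ : Fin n), dl (insert μ s) j
        = ∏ j ∈ Finset.univ.erase (⟨μ.1/2, hlt⟩ : Fin n), dl s j := by
      refine Finset.prod_congr rfl (fun j hj => dl_unchanged s μ hmin hμs j ?_)
      intro hc
      exact (Finset.mem_erase.mp hj).1 (Fin.ext hc)
    calc ∏ j, dl (insert μ s) j
        = dl (insert μ s) ⟨μ.1/2, hlt⟩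
            * ∏ j ∈ Finset.univ.erase (⟨μ.1/2, hlt⟩ : Fin n), dl (insert μ s) j :=
          (Finset.mul_prod_erase _ _ (Finset.mem_univ _)).symm
      _ = ((-1:ℂ)^(s.card) * dl s ⟨μ.1/2, hlt⟩)
            * ∏ j ∈ Finset.univ.erase (⟨μ.1/2, hlt⟩ : Fin n), dl s j := by
          rw [dl_step s μ hmin hμs ⟨μ.1/2, hlt⟩ rfl, h1]
      _ = (-1:ℂ)^(s.card) * ∏ j, dl s j := by
          rw [mul_assoc, Finset.mul_prod_erase _ _ (Finset.mem_univ _)]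
      _ = (-1:ℂ)^(Nat.choose (insert μ s).card 2) := by
          rw [ih, ← pow_add, Finset.card_insert_of_notMem hμs, choose_succ_two]
          congr 1
          omega

lemma cProd_conjT (s : Finset (Fin (2*n))) :
    (cProd n s)ᴴ = ((-1:ℂ)^(Nat.choose s.card 2)) • cProd n s := by
  rw [cProd_tensor, tensor_conjT]
  have h : (fun j => (qf s j)ᴴ) = fun j => dl s j • qf s j := funext fun j => by
    rw [qf, pw_conjT]
    rfl
  rw [h, tensor_smul_prod, dl_prod, ← cProd_tensor]

lemma trace_P_compl (s : Finset (Fin (2*n))) :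
    Matrix.trace (parity n * cProd n s * cProd n sᶜ)
      = (2*Complex.I)^n * (-1:ℂ)^(oddc s + Nat.choose s.card 2) := by
  rw [cProd_tensor s, cProd_tensor sᶜ, show parity n = tensor (fun _ => σZ) from rfl,
    tensor_mul, tensor_mul, trace_tensor]
  have key : ∀ j : Fin n, Matrix.trace (σZ * qf s j * qf sᶜ j) = 2*Complex.I * eps s j := by
    intro j
    rw [qf, qf, ptrace _ _ _ _ _ _ (zc_compl_mod s j), if_pos ?_]
    · rw [eps]
    · exact ⟨Finset.mem_compl, Finset.mem_compl⟩
  rw [Finset.prod_congr rfl (fun j _ => key j), Finset.prod_mul_distrib, Finset.prod_const,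
    eps_prod, Finset.card_univ, Fintype.card_fin]

lemma trace_P_ne_factor (s t : Finset (Fin (2*n))) (μ : Fin (2*n)) (j : Fin n)
    (hj : j.1 = μ.1/2)
    (hμbad : ¬((μ ∈ t) ↔ (μ ∉ s)))
    (hcompl : ∀ ν : Fin (2*n), μ < ν → ((ν ∈ t) ↔ (ν ∉ s))) :
    Matrix.trace (σZ * qf s j * qf t j) = 0 := by
  have hmu := μ.isLt
  have hzsum : zc s j + zc t j = 2*n - (2*j.1+2) := by
    have hdis : Disjoint (s.filter (fun x => 2*j.1+2 ≤ x.1))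
        (t.filter (fun x => 2*j.1+2 ≤ x.1)) := by
      rw [Finset.disjoint_left]
      intro ν hνs hνt
      obtain ⟨hν1, hν2⟩ := Finset.mem_filter.mp hνs
      obtain ⟨hν3, _⟩ := Finset.mem_filter.mp hνt
      have : μ < ν := by rw [Fin.lt_def]; omega
      exact (hcompl ν this).mp hν3 hν1
    have hun : s.filter (fun x => 2*j.1+2 ≤ x.1) ∪ t.filter (fun x => 2*j.1+2 ≤ x.1)
        = Finset.univ.filter (fun x => 2*j.1+2 ≤ x.1) := by
      ext ν
      simp only [Finset.mem_union, Finset.mem_filter, Finset.mem_univ, true_and]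
      constructor
      · rintro (⟨h1, h2⟩ | ⟨h1, h2⟩) <;> exact h2
      · intro hν
        have hmb : μ < ν := by rw [Fin.lt_def]; omega
        by_cases hs : ν ∈ s
        · exact Or.inl ⟨hs, hν⟩
        · exact Or.inr ⟨(hcompl ν hmb).mpr hs, hν⟩
    have := card_univ_filter_le (2*n) (2*j.1+2)
    rw [← hun, Finset.card_union_of_disjoint hdis] at this
    unfold zc
    omega
  have hzmod : zc s j % 2 = zc t j % 2 := by
    have := j.isLt
    omega
  rw [qf, qf, ptrace _ _ _ _ _ _ hzmod, if_neg ?_]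
  rintro ⟨h0, h1⟩
  rcases Nat.mod_two_eq_zero_or_one μ.1 with hpar | hpar
  · have hf0μ : f0 j = μ := Fin.ext (show 2*j.1 = μ.1 by omega)
    rw [hf0μ] at h0
    exact hμbad h0
  · have hf1μ : f1 j = μ := Fin.ext (show 2*j.1+1 = μ.1 by omega)
    rw [hf1μ] at h1
    exact hμbad h1

lemma trace_P_ne (s t : Finset (Fin (2*n))) (hst : t ≠ sᶜ) :
    Matrix.trace (parity n * cProd n s * cProd n t) = 0 := by
  classical
  set bad := Finset.univ.filter (fun μ : Fin (2*n) => ¬((μ ∈ t) ↔ (μ ∉ s))) with hbad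
  have hne : bad.Nonempty := by
    by_contra hc
    rw [Finset.not_nonempty_iff_eq_empty] at hc
    apply hst
    ext x
    rw [Finset.mem_compl]
    by_contra hx
    have : x ∈ bad := by simp only [hbad, Finset.mem_filter, Finset.mem_univ, true_and]; tauto
    rw [hc] at this
    exact absurd this (Finset.notMem_empty x)
  obtain ⟨μ, hμmem⟩ : ∃ μ, μ ∈ bad ∧ ∀ ν ∈ bad, ν ≤ μ :=
    ⟨bad.max' hne, Finset.max'_mem bad hne, fun ν hν => Finset.le_max' bad ν hν⟩
  obtain ⟨hμb, hμmax⟩ := hμmem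
  have hμbad : ¬((μ ∈ t) ↔ (μ ∉ s)) := (Finset.mem_filter.mp hμb).2
  have hcompl : ∀ ν : Fin (2*n), μ < ν → ((ν ∈ t) ↔ (ν ∉ s)) := by
    intro ν hν
    by_contra hc
    have hb : ν ∈ bad := Finset.mem_filter.mpr ⟨Finset.mem_univ _, hc⟩
    exact absurd hν (not_lt.mpr (hμmax ν hb))
  have hlt : μ.1/2 < n := by have := μ.isLt; omega
  have hfac := trace_P_ne_factor s t μ ⟨μ.1/2, hlt⟩ rfl hμbad hcompl
  rw [cProd_tensor s, cProd_tensor t, show parity n = tensor (fun _ => σZ) from rfl,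
    tensor_mul, tensor_mul, trace_tensor]
  exact Finset.prod_eq_zero (Finset.mem_univ (⟨μ.1/2, hlt⟩ : Fin n)) hfac

end TQ1

namespace TQ1
variable {n : ℕ}

lemma negOnePow_congr (a b : ℕ) (h : a % 2 = b % 2) : (-1:ℂ)^a = (-1:ℂ)^b := by
  rw [negOnePowC, negOnePowC, h]

lemma choose_2n_mod (n : ℕ) : (2*n).choose 2 % 2 = n % 2 := by
  rw [Nat.choose_two_right, show 2*n*(2*n-1) = 2*(n*(2*n-1)) from mul_assoc 2 n _,
    Nat.mul_div_cancel_left _ (by norm_num)]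
  rcases Nat.even_or_odd n with h | h
  · rw [Nat.even_iff.mp h, Nat.even_iff.mp (h.mul_right _)]
  · rcases n with _ | m
    · simp at h
    · have hodd : Odd ((m+1)*(2*(m+1)-1)) := h.mul ⟨m, by omega⟩
      rw [Nat.odd_iff.mp h, Nat.odd_iff.mp hodd]

lemma arith (n : ℕ) : ∀ κ, κ ≤ 2*n → (n + κ + κ/2 + Nat.choose (2*n-κ) 2) % 2 = 0 := by
  intro κ
  induction κ with
  | zero =>
    intro _
    have := choose_2n_mod n
    simp only [Nat.sub_zero]
    omega
  | succ k ih =>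
    intro hk
    have h1 := ih (by omega)
    have hch : (2*n - k).choose 2 = (2*n - (k+1)).choose 2 + (2*n - (k+1)) := by
      rw [show 2*n - k = (2*n - (k+1)) + 1 by omega, choose_succ_two]
    generalize hA : (2*n - k).choose 2 = A at h1 hch
    generalize hB : (2*n - (k+1)).choose 2 = B at hch ⊢
    rcases Nat.even_or_odd k with ⟨q, rfl⟩ | ⟨q, rfl⟩
    · rw [show (q+q)/2 = q by omega] at h1
      rw [show (q+q+1)/2 = q by omega]
      omega
    · rw [show (2*q+1)/2 = q by omega] at h1
      rw [show (2*q+1+1)/2 = q+1 by omega]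
      omega

lemma sign_core (n κ : ℕ) (hκ : κ ≤ 2*n) :
    ((-1:ℂ))^(κ/2) * (-1:ℂ)^(Nat.choose (2*n-κ) 2) = (-1:ℂ)^n * (-1:ℂ)^κ := by
  rw [← pow_add, ← pow_add]
  exact negOnePow_congr _ _ (by have := arith n κ hκ; omega)

lemma piSum_mod (s : Finset (Fin (2*n))) : (-1:ℂ)^(piSum n s) = (-1:ℂ)^(oddc s + s.card) := by
  have h : piSum n s % 2 = (oddc s + s.card) % 2 := by
    have h1 : oddc s + s.card = ∑ μ ∈ s, (μ.1 % 2 + 1) := by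
      rw [oddc, Finset.card_filter, Finset.card_eq_sum_ones, ← Finset.sum_add_distrib]
      exact Finset.sum_congr rfl fun μ _ => by split <;> omega
    rw [piSum, h1, Finset.sum_nat_mod s 2 (fun μ : Fin (2*n) => μ.1 + 1),
      Finset.sum_nat_mod s 2 (fun μ : Fin (2*n) => μ.1 % 2 + 1)]
    congr 1
    exact Finset.sum_congr rfl fun μ _ => by omega
  exact negOnePow_congr _ _ h

lemma scalar_key (n κ o : ℕ) (hκ : κ ≤ 2*n) (R : ℂ) :
    ((2^n : ℂ) * R)⁻¹ * (-Complex.I)^n * Complex.I^(κ%2) * (-1:ℂ)^(o + κ)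
    = (-1:ℂ)^(κ/2) * R⁻¹ * Complex.I^(κ%2) * ((2^n:ℂ))⁻¹ * ((2^n:ℂ))⁻¹ *
      ((-1:ℂ)^(Nat.choose κ 2) * ((-1:ℂ)^(Nat.choose (2*n-κ) 2) *
        ((2*Complex.I)^n * (-1:ℂ)^(o + Nat.choose κ 2)))) := by
  by_cases hR : R = 0
  · simp [hR]
  have h2 : (2:ℂ)^n ≠ 0 := pow_ne_zero _ two_ne_zero
  have hxy := sign_core n κ hκ
  have hww : ((-1:ℂ))^(Nat.choose (2*n-κ) 2) * ((-1:ℂ))^(Nat.choose (2*n-κ) 2) = 1 := by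
    rw [← pow_add, negOnePowC, if_pos (by omega)]
  have hz : ((-1:ℂ))^(κ/2) = (-1:ℂ)^n * (-1:ℂ)^κ * (-1:ℂ)^(Nat.choose (2*n-κ) 2) := by
    linear_combination ((-1:ℂ))^(Nat.choose (2*n-κ) 2) * hxy - ((-1:ℂ))^(κ/2) * hww
  rw [mul_inv, neg_pow, mul_pow, pow_add ((-1:ℂ)) o κ, pow_add ((-1:ℂ)) o (Nat.choose κ 2), hz]
  rcases Nat.mod_two_eq_zero_or_one (Nat.choose κ 2) with hc | hc <;>
    rcases Nat.mod_two_eq_zero_or_one (Nat.choose (2*n-κ) 2) with hw | hw <;>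
    rw [negOnePowC (Nat.choose κ 2), negOnePowC (Nat.choose (2*n-κ) 2)] <;>
    simp only [hc, hw, if_true, if_false, reduceIte, one_ne_zero] <;>
    field_simp <;> ring

end TQ1

namespace TQ1
variable {n : ℕ}

lemma trace_P_bilin (F G : Finset (Finset (Fin (2*n)))) (a b : Finset (Fin (2*n)) → ℂ) (c : ℂ) :
    Matrix.trace (parity n * (c • ∑ s ∈ F, a s • cProd n s) * (c • ∑ t ∈ G, b t • cProd n t))
      = c * c * ∑ s ∈ F, ∑ t ∈ G, a s * b t *
          Matrix.trace (parity n * cProd n s * cProd n t) := by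
  simp only [Matrix.mul_smul, Matrix.smul_mul, Matrix.mul_sum, Matrix.sum_mul,
    Matrix.trace_sum, Matrix.trace_smul, smul_eq_mul, Finset.mul_sum]
  rw [Finset.sum_comm]
  refine Finset.sum_congr rfl fun s hs => Finset.sum_congr rfl fun t ht => ?_
  ring

end TQ1


open TQ1 in
/-- For Hermitian `O`: `Tr((O ⊗ O) Q_κ^1) = (−1)^{⌊κ/2⌋} C(2n,κ)^{−1/2} C_κ(O)`. -/
theorem trace_OO_Q1 (n : ℕ) (hn : 1 ≤ n) (κ : ℕ) (hκ : κ ≤ 2 * n)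
    (O : NMat n) (hO : O.IsHermitian) :
    Matrix.trace ((O ⊗ₖ O) * Q1 n κ) =
      ((-1 : ℂ)) ^ (κ / 2) * (((Real.sqrt (Nat.choose (2 * n) κ) : ℝ) : ℂ))⁻¹ *
        coherence n κ O := by
  classical
  set R : ℂ := ((Real.sqrt (Nat.choose (2 * n) κ) : ℝ) : ℂ) with hRdef
  set F := Finset.powersetCard κ (Finset.univ : Finset (Fin (2*n))) with hFdef
  set G := Finset.powersetCard (2*n-κ) (Finset.univ : Finset (Fin (2*n))) with hGdef
  have hLHS : Matrix.trace ((O ⊗ₖ O) * Q1 n κ)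
      = ∑ s ∈ F, (Qnorm n κ * (-Complex.I)^n * Complex.I^(κ%2) * (-1:ℂ)^(piSum n s))
          * (Matrix.trace (O * cProd n s) * Matrix.trace (O * cProd n sᶜ)) := by
    rw [Q1, Matrix.mul_smul, Matrix.trace_smul, smul_eq_mul, Matrix.mul_sum,
      Matrix.trace_sum, Finset.mul_sum]
    refine Finset.sum_congr rfl fun s hs => ?_
    rw [Matrix.mul_smul, Matrix.trace_smul, smul_eq_mul, ← Matrix.mul_kronecker_mul,
      Matrix.trace_kronecker]
    ring
  have hRHS : ((-1 : ℂ)) ^ (κ / 2) * R⁻¹ * coherence n κ O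
      = ∑ s ∈ F, ((-1 : ℂ)) ^ (κ / 2) * R⁻¹ * Complex.I^(κ%2) * ((2^n:ℂ))⁻¹ * ((2^n:ℂ))⁻¹ *
          (Matrix.trace ((cProd n s)ᴴ * O) * Matrix.trace ((cProd n sᶜ)ᴴ * O) *
            Matrix.trace (parity n * cProd n s * cProd n sᶜ)) := by
    rw [coherence, projB, projB, trace_P_bilin F G _ _ _]
    have hsingle : ∀ s ∈ F,
        (∑ t ∈ G, Matrix.trace ((cProd n s)ᴴ * O) * Matrix.trace ((cProd n t)ᴴ * O) *
          Matrix.trace (parity n * cProd n s * cProd n t))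
        = Matrix.trace ((cProd n s)ᴴ * O) * Matrix.trace ((cProd n sᶜ)ᴴ * O) *
            Matrix.trace (parity n * cProd n s * cProd n sᶜ) := by
      intro s hs
      refine Finset.sum_eq_single_of_mem sᶜ ?_ (fun t ht hne => ?_)
      · rw [hGdef, Finset.mem_powersetCard_univ, Finset.card_compl, Fintype.card_fin,
          Finset.mem_powersetCard_univ.mp (hFdef ▸ hs)]
      · rw [trace_P_ne s t hne, mul_zero]
    have hrw := Finset.sum_congr rfl hsingle
    rw [hrw]
    simp only [Finset.mul_sum]
    refine Finset.sum_congr rfl fun s hs => ?_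
    ring
  rw [hLHS, hRHS]
  refine Finset.sum_congr rfl fun s hs => ?_
  have hsc : s.card = κ := Finset.mem_powersetCard_univ.mp (hFdef ▸ hs)
  have hscc : (sᶜ).card = 2*n - κ := by
    rw [Finset.card_compl, Fintype.card_fin, hsc]
  have ha : Matrix.trace ((cProd n s)ᴴ * O)
      = (-1:ℂ)^(Nat.choose κ 2) * Matrix.trace (O * cProd n s) := by
    rw [cProd_conjT, hsc, Matrix.smul_mul, Matrix.trace_smul, smul_eq_mul,
      Matrix.trace_mul_comm]
  have hb : Matrix.trace ((cProd n sᶜ)ᴴ * O)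
      = (-1:ℂ)^(Nat.choose (2*n-κ) 2) * Matrix.trace (O * cProd n sᶜ) := by
    rw [cProd_conjT, hscc, Matrix.smul_mul, Matrix.trace_smul, smul_eq_mul,
      Matrix.trace_mul_comm]
  have hp : Matrix.trace (parity n * cProd n s * cProd n sᶜ)
      = (2*Complex.I)^n * (-1:ℂ)^(oddc s + Nat.choose κ 2) := by
    rw [trace_P_compl, hsc]
  rw [ha, hb, hp, piSum_mod, hsc, Qnorm]
  linear_combination (Matrix.trace (O * cProd n s) * Matrix.trace (O * cProd n sᶜ)) *
    scalar_key n κ (oddc s) hκ R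


end
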